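/- Let d ≥ 1 and 1 ≤ k ≤ d be integers, let u : Fin k → ℝ^d be an orthonormal family, and let x = w + y ∈ ℝ^d with ‖x‖ < 1, where ⟨w, u i⟩ = 0 for all i and y lies in the linear span of {u i : i ∈ Fin k}. Define the k × k real matrix M by M i j := ((1−‖x‖²)⟨u i, u j⟩ + ⟨x, u i⟩·⟨x, u j⟩) / (1−‖x‖²)². Then det M = (1 − ‖w‖²) / (1−‖x‖²)^{k+1}. -/

import Mathlib

open RealInnerProductSpace

/-- Gram determinant of the Beltrami–Klein metric at x = w + y with respect to an
orthonormal family u : Fin k → ℝ^d, where w ⊥ span u and y ∈ span u, ‖x‖ < 1: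
det M = (1 − ‖w‖²)/(1 − ‖x‖²)^{k+1}, where
M i j = ((1−‖x‖²)⟨uᵢ, uⱼ⟩ + ⟨x, uᵢ⟩⟨x, uⱼ⟩)/(1−‖x‖²)². -/
theorem beltrami_klein_gram_det_proj (d k : ℕ) (hd : 1 ≤ d) (hk1 : 1 ≤ k) (hkd : k ≤ d)
    (u : Fin k → EuclideanSpace ℝ (Fin d)) (hu : Orthonormal ℝ u)
    (w y : EuclideanSpace ℝ (Fin d))
    (hw : ∀ i, ⟪w, u i⟫ = 0) (hy : y ∈ Submodule.span ℝ (Set.range u))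
    (x : EuclideanSpace ℝ (Fin d)) (hxwy : x = w + y) (hx : ‖x‖ < 1) :
    Matrix.det (Matrix.of fun i j : Fin k =>
        ((1 - ‖x‖ ^ 2) * ⟪u i, u j⟫ + ⟪x, u i⟫ * ⟪x, u j⟫) / (1 - ‖x‖ ^ 2) ^ 2)
      = (1 - ‖w‖ ^ 2) / (1 - ‖x‖ ^ 2) ^ (k + 1) := by
  set a : ℝ := 1 - ‖x‖ ^ 2 with ha
  have hxn : 0 ≤ ‖x‖ := norm_nonneg x
  have ha0 : 0 < a := by
    have : ‖x‖ ^ 2 < 1 := by nlinarith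
    simp only [ha]; linarith
  have ha0' : a ≠ 0 := ne_of_gt ha0
  -- coefficients of y
  obtain ⟨f, hf⟩ := (Submodule.mem_span_range_iff_exists_fun ℝ).1 hy
  set c : Fin k → ℝ := fun i => ⟪x, u i⟫ with hc
  have hxu : ∀ i, ⟪x, u i⟫ = c i := fun i => rfl
  have hcf : ∀ i, c i = f i := by
    intro i
    have h1 : c i = ⟪y, u i⟫ := by
      show ⟪x, u i⟫ = ⟪y, u i⟫
      rw [hxwy, inner_add_left, hw i, zero_add]
    rw [h1, ← hf, hu.inner_left_fintype]
    simp
  -- ‖y‖² = ∑ f i ^2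
  have hyn : ‖y‖ ^ 2 = ∑ i, f i * f i := by
    have h2 := hu.inner_sum f f Finset.univ
    simp only [starRingEnd_apply, star_trivial] at h2
    rw [hf] at h2
    rw [← real_inner_self_eq_norm_sq, h2]
  -- ⟪w, y⟫ = 0
  have hwy : ⟪w, y⟫ = 0 := by
    rw [← hf, inner_sum]
    simp only [real_inner_smul_right, hw, mul_zero, Finset.sum_const_zero]
  -- ‖x‖² = ‖w‖² + ‖y‖²
  have hxsq : ‖x‖ ^ 2 = ‖w‖ ^ 2 + ‖y‖ ^ 2 := by
    rw [hxwy, ← real_inner_self_eq_norm_sq, ← real_inner_self_eq_norm_sq,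
      ← real_inner_self_eq_norm_sq, inner_add_add_self]
    have h3 : ⟪y, w⟫ = (0:ℝ) := by rw [real_inner_comm]; exact hwy
    rw [h3, hwy]
    ring
  have hsum : ∑ i, c i * c i = ‖y‖ ^ 2 := by
    rw [hyn]; exact Finset.sum_congr rfl fun i _ => by rw [hcf]
  -- rewrite the matrix
  have hM : (Matrix.of fun i j : Fin k =>
        ((1 - ‖x‖ ^ 2) * ⟪u i, u j⟫ + ⟪x, u i⟫ * ⟪x, u j⟫) / (1 - ‖x‖ ^ 2) ^ 2)
      = (a⁻¹ : ℝ) • ((1 : Matrix (Fin k) (Fin k) ℝ)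
          + Matrix.replicateCol Unit (fun i => a⁻¹ * c i) * Matrix.replicateRow Unit c) := by
    ext i j
    have hij : ⟪u i, u j⟫ = if i = j then (1 : ℝ) else 0 := by
      rcases eq_or_ne i j with rfl | h
      · rw [if_pos rfl, real_inner_self_eq_norm_sq, hu.1 i]; norm_num
      · rw [if_neg h]; exact hu.2 h
    simp only [Matrix.of_apply, Matrix.smul_apply, Matrix.add_apply, Matrix.mul_apply,
      Matrix.replicateCol_apply, Matrix.replicateRow_apply, Finset.univ_unique, Finset.sum_singleton,
      Matrix.one_apply, smul_eq_mul, ← ha, hij, hxu]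
    rcases eq_or_ne i j with rfl | h
    · field_simp
    · field_simp
  rw [hM, Matrix.det_smul, Matrix.det_one_add_replicateCol_mul_replicateRow]
  have hdot : dotProduct c (fun i => a⁻¹ * c i) = a⁻¹ * ‖y‖ ^ 2 := by
    simp only [dotProduct, ← hsum, Finset.mul_sum]
    exact Finset.sum_congr rfl fun i _ => by ring
  rw [hdot]
  have hw2 : 1 - ‖w‖ ^ 2 = a + ‖y‖ ^ 2 := by rw [ha]; nlinarith [hxsq]
  rw [hw2]
  have hcard : Fintype.card (Fin k) = k := Fintype.card_fin k
  rw [hcard]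
  have hak : (a : ℝ) ^ (k + 1) ≠ 0 := pow_ne_zero _ ha0'
  have h4 : 1 + a⁻¹ * ‖y‖ ^ 2 = a⁻¹ * (a + ‖y‖ ^ 2) := by
    rw [mul_add, inv_mul_cancel₀ ha0']
  rw [h4, ← mul_assoc, ← pow_succ, inv_pow, div_eq_mul_inv, mul_comm]
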